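/- In the semigroup H, if X and Y are nonempty words in the letters a1, a2, a3, then L·X·Y = M·P·X·R·s1·Q·Y; moreover, if X or Y contains any letter outside {a1,a2,a3}, then L·X·Y = 0. -/

import Mathlib

inductive Phi
  | L | M | P | Q | R | g | s1 | s2 | t1 | t2 | t3 | a1 | a2 | a3
deriving DecidableEq

open Phi

abbrev W0 := WithZero (FreeMonoid Phi)

def w (l : List Phi) : W0 := ((FreeMonoid.ofList l : FreeMonoid Phi) : W0)

def ai : Fin 3 → Phi
  | 0 => a1 | 1 => a2 | 2 => a3

def ti : Fin 3 → Phi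
  | 0 => t1 | 1 => t2 | 2 => t3

def si : Fin 2 → Phi
  | 0 => s1 | 1 => s2

/-- `x` is one of the letters `a1, a2, a3`. -/
def isA (x : Phi) : Prop := x = a1 ∨ x = a2 ∨ x = a3

/-- The defining relations (1)–(14) of the semigroup `H`. -/
inductive rel : W0 → W0 → Prop
  | r1L (x : Phi) : rel (w [x, L]) 0
  | r1M (x : Phi) : rel (w [x, M]) 0
  | r2 : rel (w [L]) (w [M, P, g])
  | r3 (i : Fin 3) : rel (w [g, ai i]) (w [ai i, g])
  | r4 (x : Phi) (h : ¬ isA x) : rel (w [g, x]) 0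
  | r5 (i j : Fin 3) : rel (w [ai i, g, ai j]) (w [ai i, R, s1, Q, ai j])
  | r6 (i : Fin 3) (x : Phi) (h : x = R ∨ isA x) : rel (w [ti i, x]) (w [x, ti i])
  | r7 (i : Fin 3) : rel (w [P, ai i, ti i]) (w [ai i, P, s1])
  | r8 (i j : Fin 3) (h : i ≠ j) : rel (w [P, ai j, ti i]) (w [ai j, P, s2])
  | r9 (i : Fin 3) (j : Fin 2) : rel (w [si j, ai i]) (w [ai i, si j])
  | r10 : rel (w [s1, R]) (w [R, s1])
  | r11 (i : Fin 3) : rel (w [s1, Q, ai i]) (w [ti i, ai i, Q])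
  | r12 : rel (w [P, R, s1]) 0
  | r13 (i : Fin 3) : rel (w [s2, R, ai i]) (w [ai i, s2, R])
  | r14 (i : Fin 3) : rel (w [s2, R, Q, ai i]) (w [R, ti i, ai i, Q])

/-- The congruence on the free monoid with zero generated by the relations. -/
def hCon : Con W0 := conGen rel

/-- The semigroup (with zero) `H` of the paper. -/
abbrev H := hCon.Quotient

/-- The quotient map. -/
def q : W0 →* H := hCon.mk'

/-- `l` is a word in the letters `a1, a2, a3`. -/
def Aword (l : List Phi) : Prop := ∀ x ∈ l, isA x

/-- `l` is square-free: it contains no factor `Y ++ Y` with `Y` nonempty. -/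
def SqFree (l : List Phi) : Prop := ∀ Y : List Phi, Y ≠ [] → ¬ (Y ++ Y) <:+: l

lemma wapp (l₁ l₂ : List Phi) : w (l₁ ++ l₂) = w l₁ * w l₂ := by
  simp [w]

lemma keyW {u v : W0} (h : rel u v) (c d : W0) : q (c * u * d) = q (c * v * d) := by
  have h1 : hCon u v := ConGen.Rel.of _ _ h
  have h2 : hCon (c * u * d) (c * v * d) :=
    hCon.mul (hCon.mul (hCon.refl c) h1) (hCon.refl d)
  exact hCon.eq.mpr h2

lemma keyL (c d : List Phi) {u v : List Phi} (h : rel (w u) (w v)) :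
    q (w (c ++ u ++ d)) = q (w (c ++ v ++ d)) := by
  simpa [wapp, mul_assoc] using keyW h (w c) (w d)

lemma keyL0 (c d : List Phi) {u : List Phi} (h : rel (w u) 0) :
    q (w (c ++ u ++ d)) = q 0 := by
  have := keyW h (w c) (w d)
  simpa [wapp, mul_assoc] using this

lemma isA_ex {x : Phi} (h : isA x) : ∃ i, x = ai i := by
  rcases h with rfl | rfl | rfl
  exacts [⟨0, rfl⟩, ⟨1, rfl⟩, ⟨2, rfl⟩]

lemma gA (A : List Phi) (hA : Aword A) (c d : List Phi) :
    q (w (c ++ [g] ++ A ++ d)) = q (w (c ++ A ++ [g] ++ d)) := by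
  induction A generalizing c with
  | nil => simp
  | cons y A ih =>
    obtain ⟨i, rfl⟩ : ∃ i, y = ai i := isA_ex (hA y List.mem_cons_self)
    have hA' : Aword A := fun z hz => hA z (List.mem_cons_of_mem _ hz)
    calc q (w (c ++ [g] ++ (ai i :: A) ++ d))
        = q (w (c ++ [g, ai i] ++ (A ++ d))) := by simp
      _ = q (w (c ++ [ai i, g] ++ (A ++ d))) := keyL c (A ++ d) (rel.r3 i)
      _ = q (w ((c ++ [ai i]) ++ [g] ++ A ++ d)) := by simp
      _ = q (w ((c ++ [ai i]) ++ A ++ [g] ++ d)) := ih hA' (c ++ [ai i])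
      _ = q (w (c ++ (ai i :: A) ++ [g] ++ d)) := by simp

lemma split_nonA : ∀ l : List Phi, ¬ Aword l →
    ∃ A x B, Aword A ∧ ¬ isA x ∧ l = A ++ x :: B := by
  intro l
  induction l with
  | nil => intro h; exact absurd (fun x hx => absurd hx List.not_mem_nil) h
  | cons y l ih =>
    intro h
    by_cases hy : isA y
    · have hl : ¬ Aword l := by
        intro hl
        exact h (fun z hz => by
          rcases List.mem_cons.mp hz with rfl | hz
          · exact hy
          · exact hl z hz)
      obtain ⟨A, x, B, hA, hx, rfl⟩ := ih hl
      refine ⟨y :: A, x, B, ?_, hx, rfl⟩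
      intro z hz
      rcases List.mem_cons.mp hz with rfl | hz
      · exact hy
      · exact hA z hz
    · exact ⟨[], y, l, fun z hz => absurd hz List.not_mem_nil, hy, rfl⟩

/-- if `X, Y` are nonempty words in `a1,a2,a3` then
`L·X·Y = M·P·X·R·s1·Q·Y`; if `X` or `Y` contains another letter then `L·X·Y = 0`. -/
theorem stmt2 (X Y : List Phi) (hX : X ≠ []) (hY : Y ≠ []) :
    (Aword X → Aword Y →
      q (w ([L] ++ X ++ Y)) = q (w ([M, P] ++ X ++ [R, s1, Q] ++ Y))) ∧
    ((¬ Aword X ∨ ¬ Aword Y) → q (w ([L] ++ X ++ Y)) = q 0) := by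
  constructor
  · intro hAX hAY
    obtain ⟨A, x, rfl⟩ : ∃ A x, X = A ++ [x] := by
      rcases List.eq_nil_or_concat X with rfl | ⟨A, x, rfl⟩
      · exact absurd rfl hX
      · exact ⟨A, x, by simp⟩
    obtain ⟨y, B, rfl⟩ : ∃ y B, Y = y :: B := List.exists_cons_of_ne_nil hY
    obtain ⟨i, rfl⟩ : ∃ i, x = ai i :=
      isA_ex (hAX x (by simp))
    obtain ⟨j, rfl⟩ : ∃ j, y = ai j :=
      isA_ex (hAY y List.mem_cons_self)
    have hA : Aword A := fun z hz => hAX z (by simp [hz])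
    calc q (w ([L] ++ (A ++ [ai i]) ++ (ai j :: B)))
        = q (w ([] ++ [L] ++ (A ++ [ai i] ++ ai j :: B))) := by simp
      _ = q (w ([] ++ [M, P, g] ++ (A ++ [ai i] ++ ai j :: B))) :=
          keyL [] _ rel.r2
      _ = q (w ([M, P] ++ [g] ++ (A ++ [ai i]) ++ (ai j :: B))) := by simp
      _ = q (w ([M, P] ++ (A ++ [ai i]) ++ [g] ++ (ai j :: B))) :=
          gA _ hAX [M, P] _
      _ = q (w (([M, P] ++ A) ++ [ai i, g, ai j] ++ B)) := by simp
      _ = q (w (([M, P] ++ A) ++ [ai i, R, s1, Q, ai j] ++ B)) :=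
          keyL _ _ (rel.r5 i j)
      _ = q (w ([M, P] ++ (A ++ [ai i]) ++ [R, s1, Q] ++ (ai j :: B))) := by simp
  · intro h
    have hXY : ¬ Aword (X ++ Y) := by
      intro hXY
      rcases h with h | h
      · exact h (fun z hz => hXY z (List.mem_append_left _ hz))
      · exact h (fun z hz => hXY z (List.mem_append_right _ hz))
    obtain ⟨A, x, B, hA, hx, hsplit⟩ := split_nonA (X ++ Y) hXY
    calc q (w ([L] ++ X ++ Y))
        = q (w ([] ++ [L] ++ (X ++ Y))) := by simp
      _ = q (w ([] ++ [M, P, g] ++ (X ++ Y))) := keyL [] _ rel.r2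
      _ = q (w ([M, P] ++ [g] ++ A ++ (x :: B))) := by rw [hsplit]; simp
      _ = q (w ([M, P] ++ A ++ [g] ++ (x :: B))) := gA A hA [M, P] _
      _ = q (w (([M, P] ++ A) ++ [g, x] ++ B)) := by simp
      _ = q 0 := keyL0 _ _ (rel.r4 x hx)
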